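/- For two binary m×m arrays X and Y, the single-row-deletion balls D_{1,0}(X) and D_{1,0}(Y) are disjoint if and only if the single-row-insertion balls I_{1,0}(X) and I_{1,0}(Y) are disjoint. -/

import Mathlib

/-- `E` is obtained from `X` by deleting rows and columns (keeping relative order). -/
def IsSubArray {r1 c1 r2 c2 : ℕ} (E : Matrix (Fin r1) (Fin c1) Bool)
    (X : Matrix (Fin r2) (Fin c2) Bool) : Prop :=
  ∃ f : Fin r1 → Fin r2, ∃ g : Fin c1 → Fin c2,
    StrictMono f ∧ StrictMono g ∧ ∀ i j, E i j = X (f i) (g j)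

section Aux

variable {α : Type*}

/-- A sublist one shorter comes from deleting a single element. -/
lemma sublist_succ_decomp : ∀ {e x : List α}, List.Sublist e x → x.length = e.length + 1 →
    ∃ l₁ a l₂, e = l₁ ++ l₂ ∧ x = l₁ ++ a :: l₂ := by
  intro e x h
  induction h with
  | slnil => intro hl; simp at hl
  | @cons u v a h ih =>
    intro hl
    have hx : v.length = u.length := by simpa using hl
    have huv : u = v := h.eq_of_length hx.symm
    exact ⟨[], a, u, by simp, by simp [huv]⟩
  | @cons_cons u v a h ih =>
    intro hl
    obtain ⟨l₁, b, l₂, he, hx⟩ := ih (by simpa using hl)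
    exact ⟨a :: l₁, b, l₂, by simp [he], by simp [hx]⟩

lemma sup_of_sub {x y e : List α} (hx : List.Sublist e x) (hy : List.Sublist e y)
    (hlx : x.length = e.length + 1) (hly : y.length = e.length + 1) :
    ∃ f : List α, f.length = x.length + 1 ∧ List.Sublist x f ∧ List.Sublist y f := by
  obtain ⟨l₁, b, l₂, hel, hxl⟩ := sublist_succ_decomp hx hlx
  obtain ⟨d₁, a, d₂, hed, hyd⟩ := sublist_succ_decomp hy hly
  have key : l₁ ++ l₂ = d₁ ++ d₂ := hel.symm.trans hed
  rcases List.append_eq_append_iff.mp key with ⟨t, h1, h2⟩ | ⟨t, h1, h2⟩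
  · -- d₁ = l₁ ++ t, l₂ = t ++ d₂
    refine ⟨l₁ ++ b :: (t ++ a :: d₂), ?_, ?_, ?_⟩
    · simp [hxl, h2]; omega
    · rw [hxl, h2]
      refine (List.append_sublist_append_left _).mpr ?_
      refine List.cons_sublist_cons.mpr ?_
      exact (List.append_sublist_append_left _).mpr (List.sublist_cons_self a d₂)
    · rw [hyd, h1]
      simp only [List.append_assoc]
      refine (List.append_sublist_append_left _).mpr ?_
      exact List.sublist_cons_self b _
  · -- l₁ = d₁ ++ t, d₂ = t ++ l₂
    refine ⟨d₁ ++ a :: (t ++ b :: l₂), ?_, ?_, ?_⟩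
    · simp [hxl, h1]; omega
    · rw [hxl, h1]
      simp only [List.append_assoc]
      refine (List.append_sublist_append_left _).mpr ?_
      exact List.sublist_cons_self a _
    · rw [hyd, h2]
      refine (List.append_sublist_append_left _).mpr ?_
      refine List.cons_sublist_cons.mpr ?_
      exact (List.append_sublist_append_left _).mpr (List.sublist_cons_self b l₂)

lemma sub_of_sup {x y f : List α} {n : ℕ} (hx : List.Sublist x f) (hy : List.Sublist y f)
    (hlx : f.length = x.length + 1) (hly : f.length = y.length + 1)
    (hn : x.length = n + 1) :
    ∃ e : List α, e.length = n ∧ List.Sublist e x ∧ List.Sublist e y := by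
  obtain ⟨l₁, b, x₂, hxd, hfx⟩ := sublist_succ_decomp hx hlx
  obtain ⟨y₁, a, y₂, hyd, hfy⟩ := sublist_succ_decomp hy hly
  have key : l₁ ++ b :: x₂ = y₁ ++ a :: y₂ := hfx.symm.trans hfy
  have hxy_len : y.length = x.length := by omega
  rcases List.append_eq_append_iff.mp key with ⟨t, h1, h2⟩ | ⟨t, h1, h2⟩
  · cases t with
    | nil =>
      simp at h1 h2
      have hxey : x = y := by rw [hxd, hyd, h1, h2.2]
      refine ⟨x.tail, ?_, List.tail_sublist x, hxey ▸ List.tail_sublist x⟩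
      simp [hn]
    | cons c t' =>
      simp at h2
      obtain ⟨hbc, hx₂⟩ := h2
      refine ⟨l₁ ++ (t' ++ y₂), ?_, ?_, ?_⟩
      · have := hn
        rw [hxd, hx₂] at this
        simp at this ⊢
        omega
      · rw [hxd, hx₂]
        refine (List.append_sublist_append_left _).mpr ?_
        refine (List.append_sublist_append_left _).mpr ?_
        exact List.sublist_cons_self a y₂
      · rw [hyd, h1]
        simp only [List.append_assoc]
        refine (List.append_sublist_append_left _).mpr ?_
        simpa using List.sublist_cons_self c (t' ++ y₂)
  · cases t with
    | nil =>
      simp at h1 h2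
      have hxey : x = y := by rw [hxd, hyd, h1, h2.2]
      refine ⟨x.tail, ?_, List.tail_sublist x, hxey ▸ List.tail_sublist x⟩
      simp [hn]
    | cons c t' =>
      simp at h2
      obtain ⟨hac, hy₂⟩ := h2
      refine ⟨y₁ ++ (t' ++ x₂), ?_, ?_, ?_⟩
      · have := hn
        rw [hxd, h1] at this
        simp at this ⊢
        omega
      · rw [hxd, h1]
        simp only [List.append_assoc]
        refine (List.append_sublist_append_left _).mpr ?_
        simpa using List.sublist_cons_self c (t' ++ x₂)
      · rw [hyd, hy₂]
        refine (List.append_sublist_append_left _).mpr ?_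
        refine (List.append_sublist_append_left _).mpr ?_
        exact List.sublist_cons_self b x₂

end Aux

/-- `StrictMono` self-map of `Fin m` is the identity. -/
lemma strictMono_fin_id {m : ℕ} {g : Fin m → Fin m} (hg : StrictMono g) : g = id := by
  have hsurj : Function.Surjective g := Finite.injective_iff_surjective.mp hg.injective
  have h1 : Set.range g = Set.range (id : Fin m → Fin m) := by
    rw [Set.range_id]
    exact Set.range_eq_univ.mpr hsurj
  have h2 := @StrictMono.range_inj (Fin m) (Fin m) _ _
    (inferInstance : WellFoundedLT (Fin m)) g id hg strictMono_id
  exact h2.mp h1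

lemma ofFn_cast {α : Type*} {n : ℕ} (l : List α) (h : l.length = n) :
    List.ofFn (fun i : Fin n => l.get (Fin.cast h.symm i)) = l := by
  subst h
  simpa using List.ofFn_get l

lemma isSubArray_iff_sublist {r1 r2 m : ℕ} (E : Matrix (Fin r1) (Fin m) Bool)
    (X : Matrix (Fin r2) (Fin m) Bool) :
    IsSubArray E X ↔ List.Sublist (List.ofFn fun i => E i) (List.ofFn fun i => X i) := by
  constructor
  · rintro ⟨f, g, hf, hg, h⟩
    have hgid : g = id := strictMono_fin_id hg
    rw [List.sublist_iff_exists_fin_orderEmbedding_get_eq]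
    have h1 : (List.ofFn fun i => E i).length = r1 := List.length_ofFn
    have h2 : (List.ofFn fun i => X i).length = r2 := List.length_ofFn
    refine ⟨(Fin.castOrderIso h1).toOrderEmbedding.trans
      ((OrderEmbedding.ofStrictMono f hf).trans (Fin.castOrderIso h2.symm).toOrderEmbedding),
      ?_⟩
    intro ix
    simp only [List.get_ofFn]
    funext j
    have := h (Fin.cast h1 ix) j
    rw [hgid] at this
    simp only [id_eq] at this
    rw [this]
    congr 1
  · intro hsub
    rw [List.sublist_iff_exists_fin_orderEmbedding_get_eq] at hsub
    obtain ⟨emb, hemb⟩ := hsub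
    have h1 : (List.ofFn fun i => E i).length = r1 := List.length_ofFn
    have h2 : (List.ofFn fun i => X i).length = r2 := List.length_ofFn
    refine ⟨fun i => Fin.cast h2 (emb (Fin.cast h1.symm i)), id, ?_, strictMono_id, ?_⟩
    · exact (Fin.cast_strictMono h2).comp (emb.strictMono.comp (Fin.cast_strictMono h1.symm))
    · intro i j
      have := hemb (Fin.cast h1.symm i)
      simp only [List.get_ofFn] at this
      have h3 := congrFun this j
      convert h3 using 3 <;> rfl

theorem single_row_indel_equivalence (m : ℕ) (X Y : Matrix (Fin m) (Fin m) Bool) :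
    (∀ E : Matrix (Fin (m - 1)) (Fin m) Bool, ¬(IsSubArray E X ∧ IsSubArray E Y)) ↔
    (∀ F : Matrix (Fin (m + 1)) (Fin m) Bool, ¬(IsSubArray X F ∧ IsSubArray Y F)) := by
  have key : (∃ E : Matrix (Fin (m - 1)) (Fin m) Bool, IsSubArray E X ∧ IsSubArray E Y) ↔
      (∃ F : Matrix (Fin (m + 1)) (Fin m) Bool, IsSubArray X F ∧ IsSubArray Y F) := by
    cases m with
    | zero =>
      constructor
      · intro _
        refine ⟨fun _ j => j.elim0, ?_, ?_⟩ <;>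
          exact ⟨fun i => i.elim0, fun j => j.elim0,
            fun i => i.elim0, fun j => j.elim0, fun i => i.elim0⟩
      · intro _
        refine ⟨fun i => i.elim0, ?_, ?_⟩ <;>
          exact ⟨fun i => i.elim0, fun j => j.elim0,
            fun i => i.elim0, fun j => j.elim0, fun i => i.elim0⟩
    | succ n =>
      constructor
      · rintro ⟨E, hEX, hEY⟩
        have hx := (isSubArray_iff_sublist E X).mp hEX
        have hy := (isSubArray_iff_sublist E Y).mp hEY
        obtain ⟨f, hfl, hxf, hyf⟩ := sup_of_sub hx hy (by simp) (by simp)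
        have hlen : f.length = n + 1 + 1 := by simp at hfl; omega
        refine ⟨fun i j => f.get (Fin.cast hlen.symm i) j, ?_, ?_⟩
        · refine (isSubArray_iff_sublist _ _).mpr ?_
          have : (List.ofFn fun i => (fun i j => f.get (Fin.cast hlen.symm i) j) i) = f :=
            ofFn_cast f hlen
          rw [this]
          simpa using hxf
        · refine (isSubArray_iff_sublist _ _).mpr ?_
          have : (List.ofFn fun i => (fun i j => f.get (Fin.cast hlen.symm i) j) i) = f :=
            ofFn_cast f hlen
          rw [this]
          simpa using hyf
      · rintro ⟨F, hXF, hYF⟩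
        have hx := (isSubArray_iff_sublist X F).mp hXF
        have hy := (isSubArray_iff_sublist Y F).mp hYF
        obtain ⟨e, hel, hex, hey⟩ := sub_of_sup (n := n) hx hy (by simp) (by simp) (by simp)
        have hlen : e.length = n + 1 - 1 := by omega
        refine ⟨fun i j => e.get (Fin.cast hlen.symm i) j, ?_, ?_⟩
        · refine (isSubArray_iff_sublist _ _).mpr ?_
          have : (List.ofFn fun i => (fun i j => e.get (Fin.cast hlen.symm i) j) i) = e :=
            ofFn_cast e hlen
          rw [this]
          simpa using hex
        · refine (isSubArray_iff_sublist _ _).mpr ?_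
          have : (List.ofFn fun i => (fun i j => e.get (Fin.cast hlen.symm i) j) i) = e :=
            ofFn_cast e hlen
          rw [this]
          simpa using hey
  simp only [← not_exists]
  exact not_congr key
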